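/- The identity h_{23}(t|t_1,Z) = −(∂/∂t) log(−φ^(1))(𝒜(t_1,t|Z)) holds, where 𝒜(t_1,t|Z) = A_{1.}(t_1|Z) + A_{23}(t|Z) − A_{23}(t_1|Z); consequently 𝒜(t_1,t|Z) = ξ(exp{−H_{23}(t|t_1,Z)}) with ξ the inverse of −φ^(1) and H_{23}(t|t_1,Z) = ∫_{t_1}^t h_{23}(u|t_1,Z)du, provided 𝒜(t_1,t_1|Z) = ξ(1), i.e., A_{1.}(t_1|Z) = ξ(1). -/

import Mathlib

open Real

private lemma deriv_nonneg_of_monotoneOn_aux {g : ℝ → ℝ} {g' x a b : ℝ}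
    (hx : x ∈ Set.Ioo a b) (hm : MonotoneOn g (Set.Icc a b))
    (hd : HasDerivAt g g' x) : 0 ≤ g' := by
  have h := hasDerivAt_iff_tendsto_slope.1 hd
  have h2 : Filter.Tendsto (slope g x) (nhdsWithin x (Set.Ioi x)) (nhds g') :=
    h.mono_left (nhdsWithin_mono x (by
      intro y hy
      simp only [Set.mem_compl_iff, Set.mem_singleton_iff]
      exact ne_of_gt hy))
  refine ge_of_tendsto h2 ?_
  filter_upwards [Ioo_mem_nhdsGT hx.2] with y hy
  rw [slope_def_field]
  apply div_nonneg
  · exact sub_nonneg.2 (hm ⟨hx.1.le, hx.2.le⟩ ⟨(hx.1.trans hy.1).le, hy.2.le⟩ hy.1.le)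
  · exact sub_nonneg.2 hy.1.le

/-- The identity `h_{23}(t|t₁) = -(∂/∂t) log(-φ')(𝒜(t₁,t))` holds, where
`𝒜(t₁,t) = A_{1.}(t₁) + A_{23}(t) - A_{23}(t₁)` and
`h_{23}(t|t₁) = -α_{23}(t) φ''(𝒜(t₁,t))/φ'(𝒜(t₁,t))`; consequently
`𝒜(t₁,t) = ξ(exp(-H_{23}(t|t₁)))` with `ξ` the inverse of `-φ'` and
`H_{23}(t|t₁) = ∫_{t₁}^t h_{23}(u|t₁) du`, provided `A_{1.}(t₁) = ξ(1)`. -/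
theorem frailty_hazard_23_log_identity (φ ξ α23 : ℝ → ℝ)
    (hφ2 : ∀ s : ℝ, DifferentiableAt ℝ (deriv φ) s)
    (hφ' : ∀ s ≥ (0:ℝ), deriv φ s < 0)
    (hξ1 : ∀ s ≥ (0:ℝ), ξ (-(deriv φ s)) = s)
    (hξ2 : ∀ u ∈ Set.Ioc (0:ℝ) 1, -(deriv φ (ξ u)) = u)
    (hα : Continuous α23) (hαnn : ∀ u, 0 ≤ α23 u)
    (t1 : ℝ) (ht1 : 0 ≤ t1) (A1t1 : ℝ) (hA1 : 0 ≤ A1t1) :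
    let 𝒜 : ℝ → ℝ := fun s => A1t1 + (∫ u in (0:ℝ)..s, α23 u) - ∫ u in (0:ℝ)..t1, α23 u
    let h23 : ℝ → ℝ := fun s => -(α23 s) * iteratedDeriv 2 φ (𝒜 s) / deriv φ (𝒜 s);
    ∀ t > t1,
      h23 t = -(deriv (fun s => Real.log (-(deriv φ (𝒜 s)))) t) ∧
      (A1t1 = ξ 1 → 𝒜 t = ξ (Real.exp (-(∫ u in t1..t, h23 u)))) := by
  intro 𝒜 h23 t ht
  -- basic facts about 𝒜
  have hA' : ∀ s : ℝ, HasDerivAt 𝒜 (α23 s) s := by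
    intro s
    have h1 : HasDerivAt (fun r => ∫ u in (0:ℝ)..r, α23 u) (α23 s) s :=
      intervalIntegral.integral_hasDerivAt_right (hα.intervalIntegrable 0 s)
        (hα.stronglyMeasurableAtFilter MeasureTheory.volume (nhds s)) hα.continuousAt
    simpa [𝒜] using (h1.const_add A1t1).sub_const (∫ u in (0:ℝ)..t1, α23 u)
  have h𝒜mono : Monotone 𝒜 :=
    monotone_of_deriv_nonneg (fun s => (hA' s).differentiableAt)
      (fun x => by rw [(hA' x).deriv]; exact hαnn x)
  have h𝒜t1 : 𝒜 t1 = A1t1 := by simp [𝒜]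
  have h𝒜nn : ∀ s, t1 ≤ s → 0 ≤ 𝒜 s := fun s hs => by
    have := h𝒜mono hs; rw [h𝒜t1] at this; linarith
  have hφd : Differentiable ℝ (deriv φ) := fun s => hφ2 s
  have hφc : Continuous (deriv φ) := hφd.continuous
  have Fpos : ∀ s, t1 ≤ s → 0 < -(deriv φ (𝒜 s)) := fun s hs =>
    neg_pos.2 (hφ' _ (h𝒜nn s hs))
  have hF : ∀ s, HasDerivAt (fun r => -(deriv φ (𝒜 r)))
      (-(deriv (deriv φ) (𝒜 s) * α23 s)) s := fun s => by
    simpa [Function.comp_def, Pi.neg_def] using ((hφ2 (𝒜 s)).hasDerivAt.comp s (hA' s)).neg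
  have hg : ∀ s, t1 ≤ s → HasDerivAt (fun r => Real.log (-(deriv φ (𝒜 r))))
      (-(deriv (deriv φ) (𝒜 s) * α23 s) / -(deriv φ (𝒜 s))) s := fun s hs =>
    (hF s).log (Fpos s hs).ne'
  have hit : iteratedDeriv 2 φ = deriv (deriv φ) := by
    rw [iteratedDeriv_succ, iteratedDeriv_one]
  have hkey : ∀ u, t1 ≤ u →
      h23 u = -(-(deriv (deriv φ) (𝒜 u) * α23 u) / -(deriv φ (𝒜 u))) := by
    intro u hu
    have hne : deriv φ (𝒜 u) ≠ 0 := (hφ' _ (h𝒜nn u hu)).ne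
    simp only [h23, hit]
    rw [neg_div_neg_eq]
    field_simp
  constructor
  · rw [(hg t ht.le).deriv]
    exact hkey t ht.le
  · intro hA1ξ
    -- injectivity of -φ' on [0, 𝒜 t]
    have hInj : Set.InjOn (fun s => -(deriv φ s)) (Set.Icc 0 (𝒜 t)) := by
      intro a ha b hb hab
      have h1 := hξ1 a ha.1
      have h2 := hξ1 b hb.1
      simp only at hab
      rw [← h1, ← h2, hab]
    have hcases := ContinuousOn.strictMonoOn_of_injOn_Icc' (h𝒜nn t ht.le)
      (hφc.neg.continuousOn) hInj
    have memIcc : ∀ s, s ∈ Set.Icc t1 t → 𝒜 s ∈ Set.Icc 0 (𝒜 t) := fun s hs =>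
      ⟨h𝒜nn s hs.1, h𝒜mono hs.2⟩
    have Gcont : ContinuousOn (fun r => Real.log (-(deriv φ (𝒜 r)))) (Set.Icc t1 t) :=
      fun x hx => ((hg x hx.1).continuousAt).continuousWithinAt
    -- integrability of the log-derivative
    have hIntOn : MeasureTheory.IntegrableOn
        (fun s => -(deriv (deriv φ) (𝒜 s) * α23 s) / -(deriv φ (𝒜 s)))
        (Set.Ioc t1 t) := by
      rcases hcases with hM | hA
      · have GMono : MonotoneOn (fun r => Real.log (-(deriv φ (𝒜 r)))) (Set.Icc t1 t) := by
          intro s hs u hu hsu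
          have hFle : -(deriv φ (𝒜 s)) ≤ -(deriv φ (𝒜 u)) :=
            hM.monotoneOn (memIcc s hs) (memIcc u hu) (h𝒜mono hsu)
          exact Real.log_le_log (Fpos s hs.1) hFle
        exact intervalIntegral.integrableOn_deriv_of_nonneg Gcont
          (fun x hx => hg x hx.1.le)
          (fun x hx => deriv_nonneg_of_monotoneOn_aux hx GMono (hg x hx.1.le))
      · have GMono : MonotoneOn (fun r => -(Real.log (-(deriv φ (𝒜 r))))) (Set.Icc t1 t) := by
          intro s hs u hu hsu
          have hFle : -(deriv φ (𝒜 u)) ≤ -(deriv φ (𝒜 s)) :=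
            hA.antitoneOn (memIcc s hs) (memIcc u hu) (h𝒜mono hsu)
          exact neg_le_neg (Real.log_le_log (Fpos u hu.1) hFle)
        have := intervalIntegral.integrableOn_deriv_of_nonneg Gcont.neg
          (fun x hx => (hg x hx.1.le).neg)
          (fun x hx => deriv_nonneg_of_monotoneOn_aux hx GMono (hg x hx.1.le).neg)
        have h2 : MeasureTheory.IntegrableOn
            (fun x => -(-(-(deriv (deriv φ) (𝒜 x) * α23 x) / -(deriv φ (𝒜 x)))))
            (Set.Ioc t1 t) := this.neg
        exact h2.congr_fun (fun x _ => neg_neg _) measurableSet_Ioc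
    have hII : IntervalIntegrable
        (fun s => -(deriv (deriv φ) (𝒜 s) * α23 s) / -(deriv φ (𝒜 s))) MeasureTheory.volume t1 t :=
      (intervalIntegrable_iff_integrableOn_Ioc_of_le ht.le).2 hIntOn
    have hFTC : (∫ u in t1..t, -(deriv (deriv φ) (𝒜 u) * α23 u) / -(deriv φ (𝒜 u)))
        = Real.log (-(deriv φ (𝒜 t))) - Real.log (-(deriv φ (𝒜 t1))) :=
      intervalIntegral.integral_eq_sub_of_hasDerivAt
        (fun x hx => hg x (by rw [Set.uIcc_of_le ht.le] at hx; exact hx.1)) hII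
    have hcong : (∫ u in t1..t, h23 u)
        = -∫ u in t1..t, -(deriv (deriv φ) (𝒜 u) * α23 u) / -(deriv φ (𝒜 u)) := by
      rw [← intervalIntegral.integral_neg]
      apply intervalIntegral.integral_congr
      intro u hu
      rw [Set.uIcc_of_le ht.le] at hu
      exact hkey u hu.1
    have hFt1 : -(deriv φ (𝒜 t1)) = 1 := by
      rw [h𝒜t1, hA1ξ]
      exact hξ2 1 ⟨one_pos, le_refl 1⟩
    rw [hcong, hFTC, neg_neg, hFt1, Real.log_one, sub_zero,
      Real.exp_log (Fpos t ht.le)]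
    exact (hξ1 (𝒜 t) (h𝒜nn t ht.le)).symm
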